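/- Let W be the ℂ-linear span, inside the complex matrices indexed by Fin d × Fin d, of the set {I_d ⊗ₖ M : M an arbitrary d×d complex matrix} ∪ {Z^a ⊗ₖ T : 1 ≤ a ≤ d−1, T a d×d complex matrix with trace T = 0}. Then I_d ⊗ₖ Z ∈ W and Z ⊗ₖ Z^{d−1} ∈ W, but their matrix product (I_d ⊗ₖ Z) · (Z ⊗ₖ Z^{d−1}) = Z ⊗ₖ I_d ∉ W. In particular, W is not closed under matrix multiplication (it is not an algebra). -/

import Mathlib

open Matrix Kronecker

/-- The diagonal matrix Z with Z[j,j] = ω^j, ω = exp(2πi/d). -/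
noncomputable def Zmat (d : ℕ) : Matrix (Fin d) (Fin d) ℂ :=
  Matrix.diagonal fun j => Complex.exp (2 * Real.pi * Complex.I / d) ^ (j : ℕ)

/-- The span W of {I ⊗ M} ∪ {Zᵃ ⊗ T : 1 ≤ a ≤ d−1, tr T = 0}. -/
noncomputable def Wspan (d : ℕ) : Submodule ℂ (Matrix (Fin d × Fin d) (Fin d × Fin d) ℂ) :=
  Submodule.span ℂ
    ({X | ∃ M : Matrix (Fin d) (Fin d) ℂ, X = (1 : Matrix (Fin d) (Fin d) ℂ) ⊗ₖ M} ∪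
     {X | ∃ a : ℕ, 1 ≤ a ∧ a ≤ d - 1 ∧
        ∃ T : Matrix (Fin d) (Fin d) ℂ, T.trace = 0 ∧ X = ((Zmat d) ^ a) ⊗ₖ T})

/-- I ⊗ Z ∈ W and Z ⊗ Z^{d−1} ∈ W, their product is Z ⊗ I, yet Z ⊗ I ∉ W:
W is not closed under matrix multiplication. -/
lemma Zpow_trace_eq_zero (d a : ℕ) (h0 : 0 < a) (hlt : a < d) :
    ((Zmat d) ^ a).trace = 0 := by
  have hd0 : d ≠ 0 := by omega
  have hprim := Complex.isPrimitiveRoot_exp d hd0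
  set ζ := Complex.exp (2 * Real.pi * Complex.I / d) with hζ
  have hne : ζ ^ a ≠ 1 := hprim.pow_ne_one_of_pos_of_lt h0.ne' hlt
  have hone : (ζ ^ a) ^ d = 1 := by
    rw [← pow_mul, mul_comm, pow_mul, hprim.pow_eq_one, one_pow]
  rw [Zmat, Matrix.diagonal_pow, Matrix.trace_diagonal]
  calc ∑ j : Fin d, ((fun j : Fin d => ζ ^ (j:ℕ)) ^ a) j
      = ∑ j : Fin d, (ζ ^ a) ^ (j:ℕ) := by
        refine Finset.sum_congr rfl fun j _ => ?_
        simp [← pow_mul, mul_comm]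
    _ = ∑ j ∈ Finset.range d, (ζ ^ a) ^ j := Fin.sum_univ_eq_sum_range _ d
    _ = ((ζ^a)^d - 1)/(ζ^a - 1) := geom_sum_eq hne d
    _ = 0 := by rw [hone]; simp

lemma Zpow_d (d : ℕ) (hd0 : d ≠ 0) : (Zmat d) ^ d = 1 := by
  have hprim := Complex.isPrimitiveRoot_exp d hd0
  rw [Zmat, Matrix.diagonal_pow]
  have : ((fun j : Fin d => Complex.exp (2 * Real.pi * Complex.I / d) ^ (j:ℕ)) ^ d)
      = fun _ : Fin d => (1 : ℂ) := by
    funext j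
    rw [Pi.pow_apply, ← pow_mul, mul_comm (j:ℕ) d, pow_mul, hprim.pow_eq_one, one_pow]
  rw [this, Matrix.diagonal_one]

noncomputable def Lfun (d : ℕ) : Matrix (Fin d × Fin d) (Fin d × Fin d) ℂ →ₗ[ℂ] ℂ :=
  (Matrix.traceLinearMap (Fin d × Fin d) ℂ ℂ).comp
    (LinearMap.mulLeft ℂ ((Zmat d ^ (d-1)) ⊗ₖ (1 : Matrix (Fin d) (Fin d) ℂ)))

theorem stmt_12 (d : ℕ) (hd : 2 ≤ d) :
    (1 : Matrix (Fin d) (Fin d) ℂ) ⊗ₖ Zmat d ∈ Wspan d ∧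
    Zmat d ⊗ₖ ((Zmat d) ^ (d - 1)) ∈ Wspan d ∧
    ((1 : Matrix (Fin d) (Fin d) ℂ) ⊗ₖ Zmat d) * (Zmat d ⊗ₖ ((Zmat d) ^ (d - 1))) =
      Zmat d ⊗ₖ (1 : Matrix (Fin d) (Fin d) ℂ) ∧
    Zmat d ⊗ₖ (1 : Matrix (Fin d) (Fin d) ℂ) ∉ Wspan d := by
  have hd0 : d ≠ 0 := by omega
  have htrd1 : ((Zmat d) ^ (d-1)).trace = 0 :=
    Zpow_trace_eq_zero d (d-1) (by omega) (by omega)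
  have hZZ : Zmat d * Zmat d ^ (d-1) = 1 := by
    rw [← pow_succ']
    have : d - 1 + 1 = d := by omega
    rw [this, Zpow_d d hd0]
  refine ⟨?_, ?_, ?_, ?_⟩
  · exact Submodule.subset_span (Or.inl ⟨Zmat d, rfl⟩)
  · refine Submodule.subset_span (Or.inr ⟨1, le_refl 1, by omega,
      Zmat d ^ (d-1), htrd1, ?_⟩)
    rw [pow_one]
  · rw [← Matrix.mul_kronecker_mul, one_mul, hZZ]
  · intro hmem
    have hker : Wspan d ≤ LinearMap.ker (Lfun d) := by
      rw [Wspan, Submodule.span_le]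
      rintro X (⟨M, rfl⟩ | ⟨a, ha1, ha2, T, hT, rfl⟩) <;>
        simp only [SetLike.mem_coe, LinearMap.mem_ker, Lfun, LinearMap.comp_apply,
          LinearMap.mulLeft_apply, Matrix.traceLinearMap_apply,
          ← Matrix.mul_kronecker_mul, Matrix.trace_kronecker]
      · rw [mul_one, htrd1, zero_mul]
      · rw [one_mul, hT, mul_zero]
    have h0 : Lfun d (Zmat d ⊗ₖ (1 : Matrix (Fin d) (Fin d) ℂ)) = 0 :=
      hker hmem
    rw [Lfun] at h0
    simp only [LinearMap.comp_apply, LinearMap.mulLeft_apply,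
      Matrix.traceLinearMap_apply, ← Matrix.mul_kronecker_mul,
      Matrix.trace_kronecker, one_mul] at h0
    rw [← pow_succ] at h0
    have hdd : d - 1 + 1 = d := by omega
    rw [hdd, Zpow_d d hd0, Matrix.trace_one] at h0
    simp only [Finset.card_univ, Fintype.card_fin] at h0
    have : (d : ℂ) ≠ 0 := Nat.cast_ne_zero.mpr hd0
    exact this (mul_self_eq_zero.mp h0)
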